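/- Let 0 < α < 1, 0 ≤ γ < 1, and let p_n be the kernel defined by p_0 = 1, p_n = Σ_{j=1}^{n}(a_{j-1}-a_j)p_{n-j} with a_i = (i+1)^{1-α} - i^{1-α}. Then there is a constant C = C(α,γ) with Σ_{j=1}^{n} p_{n-j} j^{-γ} ≤ C n^{α-γ} for all n ≥ 1. -/

import Mathlib

noncomputable def L1a (α : ℝ) (i : ℕ) : ℝ := ((i : ℝ) + 1) ^ (1 - α) - (i : ℝ) ^ (1 - α)

noncomputable def L1p (α : ℝ) : ℕ → ℝ
  | 0 => 1
  | n + 1 => ∑ j : Fin (n + 1), (L1a α j - L1a α (j + 1)) * L1p α (n - j)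

set_option linter.unusedSectionVars false

/-- MVT for rpow on [u,v], 0 ≤ u. -/
lemma rpow_mvt {t : ℝ} (ht : 0 < t) {u v : ℝ} (hu : 0 ≤ u) (huv : u < v) :
    ∃ c, u < c ∧ c < v ∧ v ^ t - u ^ t = (v - u) * (t * c ^ (t - 1)) := by
  have hcont : ContinuousOn (fun x : ℝ => x ^ t) (Set.Icc u v) := by
    intro x hx
    exact (Real.continuousAt_rpow_const x t (Or.inr ht.le)).continuousWithinAt
  have hderiv : ∀ x ∈ Set.Ioo u v, HasDerivAt (fun x : ℝ => x ^ t) (t * x ^ (t - 1)) x := by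
    intro x hx
    exact Real.hasDerivAt_rpow_const (Or.inl (lt_of_le_of_lt hu hx.1).ne')
  obtain ⟨c, hc, hceq⟩ := exists_hasDerivAt_eq_slope (fun x : ℝ => x ^ t)
    (fun x => t * x ^ (t - 1)) huv hcont hderiv
  refine ⟨c, hc.1, hc.2, ?_⟩
  have hne : v - u ≠ 0 := by linarith [hc.1, hc.2]
  rw [eq_div_iff hne] at hceq
  linarith [hceq]

lemma rpow_div_two_le {e x : ℝ} (hx : 0 < x) (he : -1 ≤ e) :
    (x / 2) ^ e ≤ 2 * x ^ e := by
  rw [Real.div_rpow hx.le (by norm_num)]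
  rw [div_le_iff₀ (Real.rpow_pos_of_pos two_pos _)]
  have h2 : (2:ℝ) ^ (-e) ≤ 2 := by
    calc (2:ℝ) ^ (-e) ≤ (2:ℝ) ^ (1:ℝ) :=
          Real.rpow_le_rpow_of_exponent_le one_le_two (by linarith)
      _ = 2 := Real.rpow_one 2
  have he2 : (2:ℝ) ^ (-e) * (2:ℝ) ^ e = 1 := by
    rw [← Real.rpow_add two_pos]; norm_num
  have hxp : (0:ℝ) < x ^ e := Real.rpow_pos_of_pos hx e
  have h2p : (0:ℝ) < (2:ℝ) ^ e := Real.rpow_pos_of_pos two_pos e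
  calc x ^ e = x ^ e * ((2:ℝ) ^ (-e) * (2:ℝ) ^ e) := by rw [he2]; ring
    _ ≤ x ^ e * (2 * (2:ℝ) ^ e) := by
        apply mul_le_mul_of_nonneg_left _ hxp.le
        exact mul_le_mul_of_nonneg_right h2 h2p.le
    _ = 2 * x ^ e * (2:ℝ) ^ e := by ring

lemma sum_Icc_rpow_neg_le {γ : ℝ} (hγ0 : 0 ≤ γ) (hγ1 : γ < 1) (m : ℕ) :
    ∑ j ∈ Finset.Icc 1 m, (j : ℝ) ^ (-γ) ≤ (m : ℝ) ^ (1 - γ) / (1 - γ) := by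
  have hσ : (0:ℝ) < 1 - γ := by linarith
  have hIcc : ∑ j ∈ Finset.Icc 1 m, (j : ℝ) ^ (-γ)
      = ∑ i ∈ Finset.range m, ((i : ℝ) + 1) ^ (-γ) := by
    rw [← Finset.Ico_add_one_right_eq_Icc, Finset.sum_Ico_eq_sum_range]
    apply Finset.sum_congr (by norm_num)
    intro i _
    congr 1
    push_cast
    ring
  rw [hIcc]
  have hterm : ∀ i : ℕ, (1 - γ) * ((i : ℝ) + 1) ^ (-γ)
      ≤ ((i : ℝ) + 1) ^ (1 - γ) - (i : ℝ) ^ (1 - γ) := by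
    intro i
    obtain ⟨c, hc1, hc2, hc3⟩ := rpow_mvt hσ (Nat.cast_nonneg i)
      (by linarith : (i:ℝ) < (i:ℝ) + 1)
    have hc0 : (0:ℝ) < c := lt_of_le_of_lt (Nat.cast_nonneg i) hc1
    have : ((i:ℝ) + 1) ^ (-γ) ≤ c ^ (-γ) :=
      Real.rpow_le_rpow_of_nonpos hc0 hc2.le (by linarith)
    have he : (1:ℝ) - γ - 1 = -γ := by ring
    rw [hc3, he]
    nlinarith
  have htele : ∑ i ∈ Finset.range m, (((i : ℝ) + 1) ^ (1 - γ) - (i : ℝ) ^ (1 - γ))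
      = (m : ℝ) ^ (1 - γ) := by
    have := Finset.sum_range_sub (fun i : ℕ => (i : ℝ) ^ (1 - γ)) m
    rw [show ∑ i ∈ Finset.range m, (((i : ℝ) + 1) ^ (1 - γ) - (i : ℝ) ^ (1 - γ))
        = ∑ i ∈ Finset.range m, ((((i+1 : ℕ)) : ℝ) ^ (1 - γ) - (i : ℝ) ^ (1 - γ)) by
      apply Finset.sum_congr rfl; intro i _; congr 2; push_cast; ring]
    rw [this, Nat.cast_zero, Real.zero_rpow (by linarith : (1:ℝ) - γ ≠ 0)]
    ring
  rw [le_div_iff₀ hσ]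
  have := Finset.sum_le_sum (fun i (_ : i ∈ Finset.range m) => hterm i)
  rw [htele] at this
  rw [← Finset.mul_sum] at this
  linarith

section Main
variable {α : ℝ} (hα0 : 0 < α) (hα1 : α < 1)
include hα0 hα1

lemma L1a_repr (i : ℕ) : ∃ c : ℝ, (i : ℝ) < c ∧ c < (i : ℝ) + 1 ∧
    L1a α i = (1 - α) * c ^ (-α) := by
  obtain ⟨c, h1, h2, h3⟩ := rpow_mvt (t := 1 - α) (by linarith) (u := (i : ℝ))
    (v := (i : ℝ) + 1) (Nat.cast_nonneg i) (by linarith)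
  refine ⟨c, h1, h2, ?_⟩
  have : (1 : ℝ) - α - 1 = -α := by ring
  rw [L1a, h3, this]; ring

lemma L1a_pos (i : ℕ) : 0 < L1a α i := by
  obtain ⟨c, h1, h2, h3⟩ := L1a_repr hα0 hα1 i
  have hc : (0 : ℝ) < c := lt_of_le_of_lt (Nat.cast_nonneg i) h1
  rw [h3]
  exact mul_pos (by linarith) (Real.rpow_pos_of_pos hc _)

lemma L1a_lower (i : ℕ) : (1 - α) * ((i : ℝ) + 1) ^ (-α) ≤ L1a α i := by
  obtain ⟨c, h1, h2, h3⟩ := L1a_repr hα0 hα1 i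
  have hc : (0 : ℝ) < c := lt_of_le_of_lt (Nat.cast_nonneg i) h1
  rw [h3]
  have := Real.rpow_le_rpow_of_nonpos hc h2.le (by linarith : -α ≤ 0)
  nlinarith

lemma L1a_anti {i j : ℕ} (hij : i ≤ j) : L1a α j ≤ L1a α i := by
  rcases eq_or_lt_of_le hij with rfl | hij
  · exact le_refl _
  obtain ⟨c, h1, h2, h3⟩ := L1a_repr hα0 hα1 i
  obtain ⟨d, g1, g2, g3⟩ := L1a_repr hα0 hα1 j
  have hc : (0 : ℝ) < c := lt_of_le_of_lt (Nat.cast_nonneg i) h1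
  have hij' : (i : ℝ) + 1 ≤ (j : ℝ) := by exact_mod_cast hij
  have hcd : c ≤ d := by linarith
  rw [h3, g3]
  have := Real.rpow_le_rpow_of_nonpos hc hcd (by linarith : -α ≤ 0)
  nlinarith

lemma L1a_cauchy (i : ℕ) : ∃ ξ : ℝ, (i : ℝ) < ξ ∧ ξ < (i : ℝ) + 1 ∧
    L1a α i * (ξ + 1) ^ (-α) = L1a α (i + 1) * ξ ^ (-α) := by
  have ht : (0:ℝ) < 1 - α := by linarith
  have hab : (i : ℝ) < (i : ℝ) + 1 := by linarith
  have hcF : ContinuousOn (fun x : ℝ => (x + 1) ^ (1 - α)) (Set.Icc (i:ℝ) ((i:ℝ)+1)) := by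
    intro x hx
    have h : ContinuousAt ((fun y : ℝ => y ^ (1 - α)) ∘ (fun x : ℝ => x + 1)) x :=
      ContinuousAt.comp (Real.continuousAt_rpow_const (x+1) (1-α) (Or.inr ht.le))
        ((continuousAt_id).add continuousAt_const)
    exact h.continuousWithinAt
  have hcG : ContinuousOn (fun x : ℝ => x ^ (1 - α)) (Set.Icc (i:ℝ) ((i:ℝ)+1)) := by
    intro x hx
    exact (Real.continuousAt_rpow_const x (1-α) (Or.inr ht.le)).continuousWithinAt
  have hdF : ∀ x ∈ Set.Ioo (i:ℝ) ((i:ℝ)+1), HasDerivAt (fun x : ℝ => (x + 1) ^ (1 - α))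
      ((1 - α) * (x + 1) ^ (-α)) x := by
    intro x hx
    have hx1 : x + 1 ≠ 0 := by
      have := lt_of_le_of_lt (Nat.cast_nonneg i) hx.1; linarith
    have h := (Real.hasDerivAt_rpow_const (p := 1 - α) (Or.inl hx1)).comp x
      ((hasDerivAt_id x).add_const 1)
    simpa [Function.comp_def, mul_comm, mul_one, show (1:ℝ) - α - 1 = -α by ring] using h
  have hdG : ∀ x ∈ Set.Ioo (i:ℝ) ((i:ℝ)+1), HasDerivAt (fun x : ℝ => x ^ (1 - α))
      ((1 - α) * x ^ (-α)) x := by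
    intro x hx
    have hx0 : x ≠ 0 := (lt_of_le_of_lt (Nat.cast_nonneg i) hx.1).ne'
    simpa [show (1:ℝ) - α - 1 = -α by ring] using
      Real.hasDerivAt_rpow_const (p := 1 - α) (Or.inl hx0)
  obtain ⟨c, hc, heq⟩ := exists_ratio_hasDerivAt_eq_ratio_slope
    (fun x : ℝ => (x + 1) ^ (1 - α)) (fun x => (1 - α) * (x + 1) ^ (-α)) hab hcF hdF
    (fun x : ℝ => x ^ (1 - α)) (fun x => (1 - α) * x ^ (-α)) hcG hdG
  refine ⟨c, hc.1, hc.2, ?_⟩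
  have hGa : ((i:ℝ)+1) ^ (1-α) - (i:ℝ) ^ (1-α) = L1a α i := rfl
  have hFa : ((i:ℝ)+1+1) ^ (1-α) - ((i:ℝ)+1) ^ (1-α) = L1a α (i+1) := by
    rw [L1a]; push_cast; ring_nf
  rw [hGa, hFa] at heq
  have hne : (1:ℝ) - α ≠ 0 := by linarith
  nlinarith [heq]

lemma L1a_logconvex (i : ℕ) :
    L1a α (i + 1) * L1a α (i + 1) ≤ L1a α i * L1a α (i + 2) := by
  obtain ⟨ξ, hξ1, hξ2, hξ⟩ := L1a_cauchy hα0 hα1 i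
  obtain ⟨η, hη1, hη2, hη⟩ := L1a_cauchy hα0 hα1 (i + 1)
  push_cast at hη1 hη2
  have hξ0 : (0:ℝ) < ξ := lt_of_le_of_lt (Nat.cast_nonneg i) hξ1
  have hη0 : (0:ℝ) < η := by linarith
  have hξη : ξ ≤ η := by linarith
  have key : (ξ + 1) ^ (-α) * η ^ (-α) ≤ ξ ^ (-α) * (η + 1) ^ (-α) := by
    rw [← Real.mul_rpow (by linarith) (by linarith), ← Real.mul_rpow (by linarith) (by linarith)]
    exact Real.rpow_le_rpow_of_nonpos (by nlinarith) (by nlinarith) (by linarith)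
  have hp1 := Real.rpow_pos_of_pos hξ0 (-α)
  have hp2 := Real.rpow_pos_of_pos hη0 (-α)
  have ha0 : 0 < L1a α i := L1a_pos hα0 hα1 i
  have ha1 : 0 < L1a α (i+1) := L1a_pos hα0 hα1 (i+1)
  have hmul : 0 < ξ ^ (-α) * η ^ (-α) := mul_pos hp1 hp2
  rw [← mul_le_mul_iff_of_pos_right hmul]
  have h2 : L1a α (i + 1) * (η + 1) ^ (-α) = L1a α (i + 2) * η ^ (-α) := by
    have : i + 1 + 1 = i + 2 := rfl
    rw [← this]; exact hη
  calc L1a α (i+1) * L1a α (i+1) * (ξ ^ (-α) * η ^ (-α))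
      = (L1a α (i+1) * ξ ^ (-α)) * (L1a α (i+1) * η ^ (-α)) := by ring
    _ = (L1a α i * (ξ+1) ^ (-α)) * (L1a α (i+1) * η ^ (-α)) := by rw [← hξ]
    _ = (L1a α i * L1a α (i+1)) * ((ξ+1) ^ (-α) * η ^ (-α)) := by ring
    _ ≤ (L1a α i * L1a α (i+1)) * (ξ ^ (-α) * (η+1) ^ (-α)) :=
        mul_le_mul_of_nonneg_left key (by positivity)
    _ = (L1a α i * ξ ^ (-α)) * (L1a α (i+1) * (η+1) ^ (-α)) := by ring
    _ = (L1a α i * ξ ^ (-α)) * (L1a α (i+2) * η ^ (-α)) := by rw [h2]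
    _ = L1a α i * L1a α (i+2) * (ξ ^ (-α) * η ^ (-α)) := by ring

lemma L1a_ratio {m : ℕ} : ∀ {n : ℕ}, m ≤ n →
    L1a α (m + 1) * L1a α n ≤ L1a α m * L1a α (n + 1) := by
  intro n
  induction n with
  | zero => intro h; interval_cases m; exact le_of_eq (mul_comm _ _)
  | succ n ih =>
    intro h
    rcases Nat.lt_or_ge m (n+1) with h' | h'
    · have h1 := ih (Nat.lt_succ_iff.mp h')
      have h2 := L1a_logconvex hα0 hα1 n
      have ha := L1a_pos hα0 hα1 n
      have hb := L1a_pos hα0 hα1 (n+1)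
      have hm := L1a_pos hα0 hα1 m
      have hm1 := L1a_pos hα0 hα1 (m+1)
      have hc := L1a_pos hα0 hα1 (n+2)
      have : L1a α (m+1) * L1a α (n+1) * (L1a α n * L1a α (n+1)) ≤
          L1a α m * L1a α (n+2) * (L1a α n * L1a α (n+1)) := by
        calc L1a α (m+1) * L1a α (n+1) * (L1a α n * L1a α (n+1))
            = (L1a α (m+1) * L1a α n) * (L1a α (n+1) * L1a α (n+1)) := by ring
          _ ≤ (L1a α m * L1a α (n+1)) * (L1a α n * L1a α (n+2)) :=
              mul_le_mul h1 h2 (by positivity) (by positivity)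
          _ = L1a α m * L1a α (n+2) * (L1a α n * L1a α (n+1)) := by ring
      have hpos : 0 < L1a α n * L1a α (n+1) := mul_pos ha hb
      exact le_of_mul_le_mul_right this hpos
    · have : m = n + 1 := le_antisymm h h'
      subst this
      exact le_of_eq (mul_comm _ _)

lemma L1a_zero : L1a α 0 = 1 := by
  have h : (1:ℝ) - α ≠ 0 := by linarith
  simp [L1a, Real.zero_rpow h, Real.one_rpow]

lemma L1p_rec (n : ℕ) : L1p α (n + 1) =
    ∑ j ∈ Finset.range (n + 1), (L1a α j - L1a α (j + 1)) * L1p α (n - j) := by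
  rw [L1p]
  exact Fin.sum_univ_eq_sum_range (fun j => (L1a α j - L1a α (j + 1)) * L1p α (n - j)) (n + 1)

lemma L1p_nonneg (n : ℕ) : 0 ≤ L1p α n := by
  induction n using Nat.strong_induction_on with
  | _ n ih =>
    match n with
    | 0 => simp only [L1p]; exact zero_le_one
    | n + 1 =>
      rw [L1p_rec hα0 hα1]
      apply Finset.sum_nonneg
      intro j hj
      apply mul_nonneg
      · have := L1a_anti hα0 hα1 (Nat.le_succ j)
        linarith
      · exact ih (n - j) (by omega)

lemma L1p_sum_a (n : ℕ) : ∑ k ∈ Finset.range (n + 1), L1p α k * L1a α (n - k) = 1 := by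
  induction n with
  | zero => simp [L1p, L1a_zero hα0 hα1]
  | succ n ih =>
    rw [Finset.sum_range_succ]
    have hlast : L1p α (n + 1) * L1a α (n + 1 - (n + 1)) = L1p α (n + 1) := by
      simp [L1a_zero hα0 hα1]
    rw [hlast, L1p_rec hα0 hα1]
    have hrefl : ∑ j ∈ Finset.range (n + 1), (L1a α j - L1a α (j + 1)) * L1p α (n - j)
        = ∑ k ∈ Finset.range (n + 1), (L1a α (n - k) - L1a α (n - k + 1)) * L1p α k := by
      rw [← Finset.sum_range_reflect]
      apply Finset.sum_congr rfl
      intro k hk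
      simp only [Finset.mem_range] at hk
      have h1 : n + 1 - 1 - k = n - k := by omega
      have h2 : n - (n - k) = k := by omega
      rw [h1, h2]
    rw [hrefl, ← ih]
    rw [← Finset.sum_add_distrib]
    apply Finset.sum_congr rfl
    intro k hk
    simp only [Finset.mem_range] at hk
    have h3 : n + 1 - k = n - k + 1 := by omega
    rw [h3]; ring
lemma L1p_q (n : ℕ) :
    ∑ i ∈ Finset.range (n + 1), (L1p α i - L1p α (i + 1)) * L1a α (n - i) = L1a α (n + 1) := by
  have h1 := L1p_sum_a hα0 hα1 n
  have h2 := L1p_sum_a hα0 hα1 (n + 1)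
  rw [Finset.sum_range_succ'] at h2
  have h2' : ∑ i ∈ Finset.range (n + 1), L1p α (i + 1) * L1a α (n - i) = 1 - L1a α (n + 1) := by
    have : ∀ i ∈ Finset.range (n + 1), L1p α (i + 1) * L1a α (n + 1 - (i + 1))
        = L1p α (i + 1) * L1a α (n - i) := by
      intro i hi
      have : n + 1 - (i + 1) = n - i := by omega
      rw [this]
    rw [Finset.sum_congr rfl this] at h2
    have h0 : L1p α 0 * L1a α (n + 1 - 0) = L1a α (n + 1) := by
      simp only [L1p]; simp
    rw [h0] at h2
    linarith
  calc ∑ i ∈ Finset.range (n + 1), (L1p α i - L1p α (i + 1)) * L1a α (n - i)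
      = ∑ i ∈ Finset.range (n + 1), (L1p α i * L1a α (n - i) - L1p α (i + 1) * L1a α (n - i)) := by
        apply Finset.sum_congr rfl; intro i _; ring
    _ = (∑ i ∈ Finset.range (n + 1), L1p α i * L1a α (n - i))
        - ∑ i ∈ Finset.range (n + 1), L1p α (i + 1) * L1a α (n - i) := Finset.sum_sub_distrib _ _
    _ = L1a α (n + 1) := by rw [h1, h2']; ring

lemma L1p_anti_succ (n : ℕ) : L1p α (n + 1) ≤ L1p α n := by
  induction n using Nat.strong_induction_on with
  | _ n ih =>
    have hq := L1p_q hα0 hα1 n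
    rw [Finset.sum_range_succ] at hq
    have hzero : n - n = 0 := by omega
    rw [hzero, L1a_zero hα0 hα1, mul_one] at hq
    -- hq : Σ_{i<n} d i a(n-i) + (p n - p (n+1)) = a(n+1)
    have hsum : ∑ i ∈ Finset.range n, (L1p α i - L1p α (i + 1)) * L1a α (n - i) ≤ L1a α (n + 1) := by
      match n with
      | 0 => simpa using (L1a_pos hα0 hα1 1).le
      | m + 1 =>
        have hqm := L1p_q hα0 hα1 m
        have han : (0:ℝ) < L1a α (m + 1) := L1a_pos hα0 hα1 (m + 1)
        have key : (∑ i ∈ Finset.range (m + 1), (L1p α i - L1p α (i + 1)) * L1a α (m + 1 - i))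
            * L1a α (m + 1) ≤
            (∑ i ∈ Finset.range (m + 1), (L1p α i - L1p α (i + 1)) * L1a α (m - i))
            * L1a α (m + 2) := by
          rw [Finset.sum_mul, Finset.sum_mul]
          apply Finset.sum_le_sum
          intro i hi
          simp only [Finset.mem_range] at hi
          have hd : 0 ≤ L1p α i - L1p α (i + 1) := by linarith [ih i (by omega)]
          have hr := L1a_ratio hα0 hα1 (m := m - i) (n := m + 1) (by omega)
          have e1 : m - i + 1 = m + 1 - i := by omega
          rw [e1] at hr
          calc (L1p α i - L1p α (i + 1)) * L1a α (m + 1 - i) * L1a α (m + 1)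
              = (L1p α i - L1p α (i + 1)) * (L1a α (m + 1 - i) * L1a α (m + 1)) := by ring
            _ ≤ (L1p α i - L1p α (i + 1)) * (L1a α (m - i) * L1a α (m + 2)) :=
                mul_le_mul_of_nonneg_left hr hd
            _ = (L1p α i - L1p α (i + 1)) * L1a α (m - i) * L1a α (m + 2) := by ring
        rw [hqm] at key
        have := (mul_le_mul_iff_of_pos_right han).mp (by linarith [key] :
          (∑ i ∈ Finset.range (m + 1), (L1p α i - L1p α (i + 1)) * L1a α (m + 1 - i))
            * L1a α (m + 1) ≤ L1a α (m + 2) * L1a α (m + 1))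
        exact this
    linarith

lemma L1p_anti {m n : ℕ} (h : m ≤ n) : L1p α n ≤ L1p α m := by
  induction n with
  | zero => simp_all
  | succ n ihn =>
    rcases Nat.lt_or_ge m (n + 1) with h' | h'
    · exact le_trans (L1p_anti_succ hα0 hα1 n) (ihn (by omega))
    · have : m = n + 1 := le_antisymm h h'
      subst this; exact le_refl _

lemma L1p_window {m n : ℕ} (h : m ≤ n) :
    (∑ k ∈ Finset.Icc m n, L1p α k) * L1a α (n - m) ≤ 1 := by
  rw [Finset.sum_mul]
  calc ∑ k ∈ Finset.Icc m n, L1p α k * L1a α (n - m)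
      ≤ ∑ k ∈ Finset.Icc m n, L1p α k * L1a α (n - k) := by
        apply Finset.sum_le_sum
        intro k hk
        simp only [Finset.mem_Icc] at hk
        exact mul_le_mul_of_nonneg_left (L1a_anti hα0 hα1 (by omega)) (L1p_nonneg hα0 hα1 k)
    _ ≤ ∑ k ∈ Finset.range (n + 1), L1p α k * L1a α (n - k) := by
        apply Finset.sum_le_sum_of_subset_of_nonneg
        · intro k hk; simp only [Finset.mem_Icc] at hk; simp only [Finset.mem_range]; omega
        · intro k _ _
          exact mul_le_mul_of_nonneg_left (L1a_pos hα0 hα1 (n - k)).le (L1p_nonneg hα0 hα1 k)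
          |>.trans_eq' (by ring)
    _ = 1 := L1p_sum_a hα0 hα1 n
lemma L1p_sum_range_le (K : ℕ) :
    ∑ k ∈ Finset.range (K + 1), L1p α k ≤ ((K : ℝ) + 1) ^ α / (1 - α) := by
  have hw := L1p_window hα0 hα1 (Nat.zero_le K)
  have hIcc : Finset.Icc 0 K = Finset.range (K + 1) := by
    ext x; simp [Nat.lt_succ_iff]
  rw [hIcc, Nat.sub_zero] at hw
  set S := ∑ k ∈ Finset.range (K + 1), L1p α k with hS
  have hS0 : 0 ≤ S := Finset.sum_nonneg fun k _ => L1p_nonneg hα0 hα1 k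
  have hK : (0:ℝ) < (K:ℝ) + 1 := by positivity
  have hlow := L1a_lower hα0 hα1 K
  have hinv : ((K:ℝ) + 1) ^ (-α) * ((K:ℝ) + 1) ^ α = 1 := by
    rw [← Real.rpow_add hK]; simp
  have hαpos : (0:ℝ) < 1 - α := by linarith
  rw [le_div_iff₀ hαpos]
  have h1 : S * ((1 - α) * ((K:ℝ) + 1) ^ (-α)) ≤ 1 :=
    le_trans (mul_le_mul_of_nonneg_left hlow hS0) hw
  have hpow : (0:ℝ) < ((K:ℝ) + 1) ^ α := Real.rpow_pos_of_pos hK α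
  nlinarith [h1, hinv, hpow, mul_le_mul_of_nonneg_right h1 hpow.le]

lemma L1p_pointwise {m : ℕ} (hm : 1 ≤ m) :
    L1p α m ≤ 2 / (1 - α) * (m : ℝ) ^ (α - 1) := by
  set t := m / 2 with ht
  have htm : t ≤ m := Nat.div_le_self m 2
  have hw := L1p_window hα0 hα1 (Nat.sub_le m t)
  have hsub : m - (m - t) = t := by omega
  rw [hsub] at hw
  -- (t+1) * p m ≤ window sum
  have hcard : (Finset.Icc (m - t) m).card = t + 1 := by
    rw [Nat.card_Icc]; omega
  have hlb : ((t : ℝ) + 1) * L1p α m ≤ ∑ k ∈ Finset.Icc (m - t) m, L1p α k := by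
    have : ∀ k ∈ Finset.Icc (m - t) m, L1p α m ≤ L1p α k := by
      intro k hk; simp only [Finset.mem_Icc] at hk
      exact L1p_anti hα0 hα1 hk.2
    calc ((t : ℝ) + 1) * L1p α m = ∑ _k ∈ Finset.Icc (m - t) m, L1p α m := by
          rw [Finset.sum_const, hcard]; push_cast; ring
      _ ≤ ∑ k ∈ Finset.Icc (m - t) m, L1p α k := Finset.sum_le_sum this
  have hat : (0:ℝ) < L1a α t := L1a_pos hα0 hα1 t
  have hpm : 0 ≤ L1p α m := L1p_nonneg hα0 hα1 m
  set T : ℝ := (t : ℝ) + 1 with hT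
  have hT0 : (0:ℝ) < T := by positivity
  have h1 : T * L1p α m * L1a α t ≤ 1 :=
    le_trans (mul_le_mul_of_nonneg_right hlb hat.le) hw
  have hlow := L1a_lower hα0 hα1 t
  have h2 : T * L1p α m * ((1 - α) * T ^ (-α)) ≤ 1 :=
    le_trans (mul_le_mul_of_nonneg_left hlow (by positivity)) h1
  -- so (1-α) * T^(1-α) * p m ≤ 1
  have hTT : T * T ^ (-α) = T ^ (1 - α) := by
    rw [show (1:ℝ) - α = 1 + -α by ring, Real.rpow_add hT0, Real.rpow_one]
  have h3 : (1 - α) * (T ^ (1 - α) * L1p α m) ≤ 1 := by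
    rw [← hTT]; nlinarith [h2]
  have hTT2 : T ^ (1 - α) * T ^ (α - 1) = 1 := by
    rw [← Real.rpow_add hT0]; norm_num
  have hTpow : (0:ℝ) < T ^ (α - 1) := Real.rpow_pos_of_pos hT0 _
  have h4 : L1p α m ≤ T ^ (α - 1) / (1 - α) := by
    rw [le_div_iff₀ (by linarith : (0:ℝ) < 1 - α)]
    nlinarith [mul_le_mul_of_nonneg_right h3 hTpow.le]
  -- T ≥ m / 2
  have hTm : (m : ℝ) / 2 ≤ T := by
    have h2t : m ≤ 2 * t + 1 := by omega
    have : (m : ℝ) ≤ 2 * (t : ℝ) + 1 := by exact_mod_cast h2t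
    rw [hT]; linarith
  have hm2 : (0:ℝ) < (m : ℝ) / 2 := by
    have : (1:ℝ) ≤ (m : ℝ) := by exact_mod_cast hm
    linarith
  have h5 : T ^ (α - 1) ≤ ((m : ℝ) / 2) ^ (α - 1) :=
    Real.rpow_le_rpow_of_nonpos hm2 hTm (by linarith)
  have h6 : ((m : ℝ) / 2) ^ (α - 1) ≤ 2 * (m : ℝ) ^ (α - 1) := by
    rw [Real.div_rpow (by positivity) (by norm_num)]
    rw [div_le_iff₀ (Real.rpow_pos_of_pos two_pos _)]
    have e : (m : ℝ) ^ (α - 1) * ((2:ℝ) ^ (α - 1) * (2:ℝ) ^ (1 - α)) = (m:ℝ) ^ (α-1) := by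
      rw [← Real.rpow_add two_pos]; norm_num
    have h2a : (2:ℝ) ^ (1 - α) ≤ 2 := by
      calc (2:ℝ) ^ (1 - α) ≤ (2:ℝ) ^ (1:ℝ) :=
            Real.rpow_le_rpow_of_exponent_le one_le_two (by linarith)
        _ = 2 := Real.rpow_one 2
    have hmp : (0:ℝ) < (m : ℝ) ^ (α - 1) := Real.rpow_pos_of_pos (by linarith) _
    have h2p : (0:ℝ) < (2:ℝ) ^ (α - 1) := Real.rpow_pos_of_pos two_pos _
    nlinarith [e, h2a, hmp, h2p, mul_le_mul_of_nonneg_left h2a (le_of_lt (mul_pos hmp h2p))]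
  calc L1p α m ≤ T ^ (α - 1) / (1 - α) := h4
    _ ≤ 2 * (m : ℝ) ^ (α - 1) / (1 - α) :=
        (div_le_div_iff_of_pos_right (by linarith : (0:ℝ) < 1 - α)).mpr (h5.trans h6)
    _ = 2 / (1 - α) * (m : ℝ) ^ (α - 1) := by ring
end Main

theorem L1p_conv_bound_small_gamma (α γ : ℝ) (hα0 : 0 < α) (hα1 : α < 1)
    (hγ0 : 0 ≤ γ) (hγ1 : γ < 1) :
    ∃ C : ℝ, 0 < C ∧ ∀ n : ℕ, 1 ≤ n →
      ∑ j ∈ Finset.Icc 1 n, L1p α (n - j) * (j : ℝ) ^ (-γ) ≤ C * (n : ℝ) ^ (α - γ) := by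
  have hs : (0:ℝ) < 1 - α := by linarith
  have hσ : (0:ℝ) < 1 - γ := by linarith
  refine ⟨4 / (1 - α) / (1 - γ) + 2 / (1 - α), by positivity, ?_⟩
  intro n hn
  set h : ℕ := n / 2 with hh
  have hn0 : (0:ℝ) < (n:ℝ) := by exact_mod_cast hn
  have hhn : h ≤ n := Nat.div_le_self n 2
  have hcasth : (h:ℝ) ≤ (n:ℝ) / 2 := by
    calc (h:ℝ) ≤ (n:ℝ) / ((2:ℕ):ℝ) := Nat.cast_div_le
      _ = (n:ℝ) / 2 := by norm_num
  -- split the sum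
  have hsplit : ∑ j ∈ Finset.Icc 1 n, L1p α (n - j) * (j : ℝ) ^ (-γ)
      = (∑ j ∈ Finset.Ioc 0 h, L1p α (n - j) * (j : ℝ) ^ (-γ))
        + ∑ j ∈ Finset.Ioc h n, L1p α (n - j) * (j : ℝ) ^ (-γ) := by
    rw [Finset.sum_Ioc_consecutive _ (Nat.zero_le h) hhn]
    exact Finset.sum_congr (Finset.Icc_add_one_left_eq_Ioc 0 n) (fun _ _ => rfl)
  rw [hsplit]
  -- Part A
  have hA : ∑ j ∈ Finset.Ioc 0 h, L1p α (n - j) * (j : ℝ) ^ (-γ)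
      ≤ (4 / (1 - α) / (1 - γ)) * (n:ℝ) ^ (α - γ) := by
    have hbound : ∀ j ∈ Finset.Ioc 0 h, L1p α (n - j) * (j : ℝ) ^ (-γ)
        ≤ (4 / (1 - α) * (n:ℝ) ^ (α - 1)) * (j : ℝ) ^ (-γ) := by
      intro j hj
      simp only [Finset.mem_Ioc] at hj
      have hj1 : 1 ≤ j := hj.1
      have hjh : j ≤ h := hj.2
      have hnj1 : 1 ≤ n - j := by omega
      have hjn : j ≤ n := le_trans hjh hhn
      have hp := L1p_pointwise hα0 hα1 hnj1
      have hcast : ((n - j : ℕ) : ℝ) = (n:ℝ) - (j:ℝ) := by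
        rw [Nat.cast_sub hjn]
      have hjr : (j:ℝ) ≤ (n:ℝ)/2 := le_trans (by exact_mod_cast hjh) hcasth
      have hge : (n:ℝ)/2 ≤ ((n - j : ℕ) : ℝ) := by rw [hcast]; linarith
      have h1 : ((n - j : ℕ) : ℝ) ^ (α - 1) ≤ ((n:ℝ)/2) ^ (α - 1) :=
        Real.rpow_le_rpow_of_nonpos (by linarith) hge (by linarith)
      have h2 : ((n:ℝ)/2) ^ (α - 1) ≤ 2 * (n:ℝ) ^ (α - 1) :=
        rpow_div_two_le hn0 (by linarith)
      have hpow : (0:ℝ) ≤ (j:ℝ) ^ (-γ) := (Real.rpow_pos_of_pos (by exact_mod_cast hj1) _).le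
      apply mul_le_mul_of_nonneg_right _ hpow
      calc L1p α (n - j) ≤ 2 / (1 - α) * ((n - j : ℕ) : ℝ) ^ (α - 1) := hp
        _ ≤ 2 / (1 - α) * (2 * (n:ℝ) ^ (α - 1)) := by
            apply mul_le_mul_of_nonneg_left (le_trans h1 h2) (by positivity)
        _ = 4 / (1 - α) * (n:ℝ) ^ (α - 1) := by ring
    calc ∑ j ∈ Finset.Ioc 0 h, L1p α (n - j) * (j : ℝ) ^ (-γ)
        ≤ ∑ j ∈ Finset.Ioc 0 h, (4 / (1 - α) * (n:ℝ) ^ (α - 1)) * (j : ℝ) ^ (-γ) :=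
          Finset.sum_le_sum hbound
      _ = (4 / (1 - α) * (n:ℝ) ^ (α - 1)) * ∑ j ∈ Finset.Icc 1 h, (j : ℝ) ^ (-γ) := by
          rw [← Finset.mul_sum, ← Finset.Icc_add_one_left_eq_Ioc, zero_add]
      _ ≤ (4 / (1 - α) * (n:ℝ) ^ (α - 1)) * ((h:ℝ) ^ (1 - γ) / (1 - γ)) := by
          apply mul_le_mul_of_nonneg_left (sum_Icc_rpow_neg_le hγ0 hγ1 h) (by positivity)
      _ ≤ (4 / (1 - α) * (n:ℝ) ^ (α - 1)) * ((n:ℝ) ^ (1 - γ) / (1 - γ)) := by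
          apply mul_le_mul_of_nonneg_left _ (by positivity)
          exact div_le_div_of_nonneg_right (Real.rpow_le_rpow (Nat.cast_nonneg h)
            (by exact_mod_cast hhn) (by linarith)) hσ.le
      _ = (4 / (1 - α) / (1 - γ)) * ((n:ℝ) ^ (α - 1) * (n:ℝ) ^ (1 - γ)) := by ring
      _ = (4 / (1 - α) / (1 - γ)) * (n:ℝ) ^ (α - γ) := by
          rw [← Real.rpow_add hn0, show α - 1 + (1 - γ) = α - γ by ring]
  -- Part B
  have hB : ∑ j ∈ Finset.Ioc h n, L1p α (n - j) * (j : ℝ) ^ (-γ)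
      ≤ (2 / (1 - α)) * (n:ℝ) ^ (α - γ) := by
    have hwt : ∀ j ∈ Finset.Ioc h n, L1p α (n - j) * (j : ℝ) ^ (-γ)
        ≤ L1p α (n - j) * (2 * (n:ℝ) ^ (-γ)) := by
      intro j hj
      simp only [Finset.mem_Ioc] at hj
      have hj1 : h + 1 ≤ j := hj.1
      have hjr : (n:ℝ)/2 ≤ (j:ℝ) := by
        have h2h : n ≤ 2 * h + 1 := by omega
        have : (n:ℝ) ≤ 2 * (h:ℝ) + 1 := by exact_mod_cast h2h
        have : (n:ℝ)/2 ≤ (h:ℝ) + 1 := by linarith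
        have hjc : (h:ℝ) + 1 ≤ (j:ℝ) := by exact_mod_cast hj1
        linarith
      have h1 : (j:ℝ) ^ (-γ) ≤ ((n:ℝ)/2) ^ (-γ) :=
        Real.rpow_le_rpow_of_nonpos (by linarith) hjr (by linarith)
      have h2 : ((n:ℝ)/2) ^ (-γ) ≤ 2 * (n:ℝ) ^ (-γ) := rpow_div_two_le hn0 (by linarith)
      exact mul_le_mul_of_nonneg_left (le_trans h1 h2) (L1p_nonneg hα0 hα1 _)
    have hreindex : ∑ j ∈ Finset.Ioc h n, L1p α (n - j)
        = ∑ k ∈ Finset.range (n - h), L1p α k := by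
      apply Finset.sum_nbij' (fun j => n - j) (fun k => n - k)
      · intro a ha; simp only [Finset.mem_Ioc] at ha; simp only [Finset.mem_range]; omega
      · intro a ha; simp only [Finset.mem_range] at ha; simp only [Finset.mem_Ioc]; omega
      · intro a ha; simp only [Finset.mem_Ioc] at ha; omega
      · intro a ha; simp only [Finset.mem_range] at ha; omega
      · intro a _; rfl
    have hnh1 : 1 ≤ n - h := by omega
    have hsum : ∑ k ∈ Finset.range (n - h), L1p α k ≤ (n:ℝ) ^ α / (1 - α) := by
      have := L1p_sum_range_le hα0 hα1 (n - h - 1)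
      rw [show n - h - 1 + 1 = n - h by omega] at this
      refine le_trans this ?_
      have hc : ((n - h - 1 : ℕ) : ℝ) + 1 ≤ (n:ℝ) := by
        have : n - h - 1 + 1 ≤ n := by omega
        exact_mod_cast this
      exact div_le_div_of_nonneg_right (Real.rpow_le_rpow (by positivity) hc hα0.le) hs.le
    calc ∑ j ∈ Finset.Ioc h n, L1p α (n - j) * (j : ℝ) ^ (-γ)
        ≤ ∑ j ∈ Finset.Ioc h n, L1p α (n - j) * (2 * (n:ℝ) ^ (-γ)) :=
          Finset.sum_le_sum hwt
      _ = (∑ j ∈ Finset.Ioc h n, L1p α (n - j)) * (2 * (n:ℝ) ^ (-γ)) := by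
          rw [Finset.sum_mul]
      _ = (∑ k ∈ Finset.range (n - h), L1p α k) * (2 * (n:ℝ) ^ (-γ)) := by rw [hreindex]
      _ ≤ ((n:ℝ) ^ α / (1 - α)) * (2 * (n:ℝ) ^ (-γ)) := by
          apply mul_le_mul_of_nonneg_right hsum (by positivity)
      _ = (2 / (1 - α)) * ((n:ℝ) ^ α * (n:ℝ) ^ (-γ)) := by ring
      _ = (2 / (1 - α)) * (n:ℝ) ^ (α - γ) := by
          rw [← Real.rpow_add hn0, show α + -γ = α - γ by ring]
  calc (∑ j ∈ Finset.Ioc 0 h, L1p α (n - j) * (j : ℝ) ^ (-γ))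
        + ∑ j ∈ Finset.Ioc h n, L1p α (n - j) * (j : ℝ) ^ (-γ)
      ≤ (4 / (1 - α) / (1 - γ)) * (n:ℝ) ^ (α - γ) + (2 / (1 - α)) * (n:ℝ) ^ (α - γ) :=
        add_le_add hA hB
    _ = (4 / (1 - α) / (1 - γ) + 2 / (1 - α)) * (n:ℝ) ^ (α - γ) := by ring
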